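/- The number of normal c-arrays of content (2, 2, ..., 2) (q twos) is 1 if q is even and 0 if q is odd; when q = 2r is even the unique such array has columns (r+j, r+1−j) each repeated twice, for j = 1, ..., r. -/

import Mathlib

/-- Tableaux are represented as lists of rows of positive integers.
`IsSSYT T` : rows weakly increasing, columns strictly increasing,
row lengths weakly decreasing, no empty rows (English notation). -/
def IsSSYT (T : List (List ℕ)) : Prop :=
  (∀ r ∈ T, List.Pairwise (· ≤ ·) r) ∧
  (∀ (i j a b : ℕ), (T.getD i [])[j]? = some a → (T.getD (i+1) [])[j]? = some b → a < b) ∧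
  (∀ i, (T.getD (i+1) []).length ≤ (T.getD i []).length) ∧
  [] ∉ T

/-- Schensted row insertion.  Returns the new tableau together with the
(0-based) index of the row in which a new box was added. -/
def rinsert : List (List ℕ) → ℕ → List (List ℕ) × ℕ
  | [], x => ([[x]], 0)
  | r :: rs, x =>
    match r.findIdx? (fun t => x < t) with
    | none => ((r ++ [x]) :: rs, 0)
    | some j =>
      let y := r.getD j 0
      let p := rinsert rs y
      ((r.set j x) :: p.1, p.2 + 1)

/-- Reverse bumping through the rows above (given in reversed order). -/
def revBump : List (List ℕ) → ℕ → List (List ℕ) × ℕ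
  | [], x => ([], x)
  | r :: rs, x =>
    let k := (r.takeWhile (· < x)).length
    if k = 0 then (r :: rs, x)
    else
      let y := r.getD (k - 1) 0
      let p := revBump rs y
      ((r.set (k - 1) x) :: p.1, p.2)

/-- Schensted deletion: remove the last box of row `i` and reverse-bump,
returning the new tableau and the ejected entry. -/
def schDelete (T : List (List ℕ)) (i : ℕ) : List (List ℕ) × ℕ :=
  let r := T.getD i []
  let x := r.getLastD 0
  let r' := r.dropLast
  let p := revBump (T.take i).reverse x
  (p.1.reverse ++ (if r' = [] then ([] : List (List ℕ)) else [r']) ++ T.drop (i + 1), p.2)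

/-- One step of `Carray2Dtableau`: insert `b` and append `a` at the end of
the next row. -/
def c2dStep (T : List (List ℕ)) (p : ℕ × ℕ) : List (List ℕ) :=
  let q := rinsert T p.2
  if q.2 + 1 < q.1.length then q.1.set (q.2 + 1) ((q.1.getD (q.2 + 1) []) ++ [p.1])
  else q.1 ++ [[p.1]]

/-- The map `Carray2Dtableau` from c-arrays (lists of columns `(aᵢ, bᵢ)`) to
tableaux of double shape. -/
def c2d (S : List (ℕ × ℕ)) : List (List ℕ) := S.foldl c2dStep []

/-- One step of `Dtableau2Carray`: extract the maximal entry `x` (occurrence of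
maximal column, at the end of row `i`), apply `schDelete` at row `i` ejecting `y`,
and remove the corresponding entry of row `i-1`. -/
def d2cStep (T : List (List ℕ)) : List (List ℕ) × (ℕ × ℕ) :=
  let x := T.flatten.foldr max 0
  let cand := (List.range T.length).filter (fun i => (T.getD i []).getLastD 0 = x)
  let i := cand.foldl (fun acc i =>
      if (T.getD acc []).length < (T.getD i []).length then i else acc) 0
  let j := (T.getD i []).length - 1
  let p := schDelete T i
  let T2 := p.1.set (i - 1) ((p.1.getD (i - 1) []).eraseIdx j)
  (T2.filter (fun r => r ≠ []), (x, p.2))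

def d2cAux : ℕ → List (List ℕ) → List (ℕ × ℕ)
  | 0, _ => []
  | n + 1, T =>
    if T = [] then []
    else
      let p := d2cStep T
      d2cAux n p.1 ++ [p.2]

/-- The map `Dtableau2Carray`. -/
def d2c (T : List (List ℕ)) : List (ℕ × ℕ) := d2cAux T.flatten.length T

/-- Content of a two-rowed array: multiplicity of each value among all entries. -/
def cntA (S : List (ℕ × ℕ)) (v : ℕ) : ℕ := (S.map Prod.fst ++ S.map Prod.snd).count v

/-- Content of a tableau. -/
def cntT (T : List (List ℕ)) (v : ℕ) : ℕ := T.flatten.count v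

/-- A c-array: each column `(aᵢ, bᵢ)` satisfies `bᵢ < aᵢ` and the columns are
weakly increasing in the lexicographic order. -/
def IsCArray (S : List (ℕ × ℕ)) : Prop :=
  (∀ p ∈ S, p.2 < p.1) ∧
  List.Chain' (fun p q : ℕ × ℕ => p.1 < q.1 ∨ (p.1 = q.1 ∧ p.2 ≤ q.2)) S

/-- Normality: every value occurs at most twice, and the bottom row contains no
weakly increasing subsequence of length 3. -/
def IsNormal (S : List (ℕ × ℕ)) : Prop :=
  (∀ v, cntA S v ≤ 2) ∧
  ∀ t : List ℕ, t.Sublist (S.map Prod.snd) → t.Pairwise (· ≤ ·) → t.length ≤ 2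

/-- A double shape: each row length is repeated an even number of times. -/
def IsDoubleShape (T : List (List ℕ)) : Prop :=
  ∃ L : List ℕ, T.map List.length = L.flatMap (fun a => [a, a])

/-- The unique candidate array with columns `(r+j, r+1-j)`, each repeated twice. -/
def sbar0 (r : ℕ) : List (ℕ × ℕ) :=
  (List.range r).flatMap (fun j => [(r + 1 + j, r - j), (r + 1 + j, r - j)])

namespace CArrayAux

def shiftP (p : ℕ × ℕ) : ℕ × ℕ := (p.1 + 1, p.2 + 1)

def Cond (q : ℕ) (S : List (ℕ × ℕ)) : Prop :=
  IsCArray S ∧ IsNormal S ∧ (∀ v, cntA S v = if 1 ≤ v ∧ v ≤ q then 2 else 0)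

lemma cntA_append (S T : List (ℕ × ℕ)) (v : ℕ) :
    cntA (S ++ T) v = cntA S v + cntA T v := by
  simp [cntA, List.count_append]
  ring

lemma mem_bounds {q : ℕ} {S : List (ℕ × ℕ)}
    (hc : ∀ v, cntA S v = if 1 ≤ v ∧ v ≤ q then 2 else 0) :
    ∀ p ∈ S, 1 ≤ p.2 ∧ p.2 ≤ q ∧ 1 ≤ p.1 ∧ p.1 ≤ q := by
  have key : ∀ v, v ∈ S.map Prod.fst ++ S.map Prod.snd → 1 ≤ v ∧ v ≤ q := by
    intro v hv
    by_contra h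
    have h2 := hc v
    rw [if_neg h] at h2
    exact (List.count_eq_zero.mp h2) hv
  intro p hp
  have h1 := key p.1 (by simp; exact Or.inl ⟨p.2, hp⟩)
  have h2 := key p.2 (by simp; exact Or.inr ⟨p.1, hp⟩)
  exact ⟨h2.1, h2.2, h1.1, h1.2⟩

lemma pairwise_of_carray {S : List (ℕ × ℕ)} (h : IsCArray S) :
    S.Pairwise (fun p q : ℕ × ℕ => p.1 < q.1 ∨ (p.1 = q.1 ∧ p.2 ≤ q.2)) := by
  haveI : IsTrans (ℕ × ℕ) (fun p q : ℕ × ℕ => p.1 < q.1 ∨ (p.1 = q.1 ∧ p.2 ≤ q.2)) := by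
    constructor
    rintro p q r (h1 | ⟨h1, h1'⟩) (h2 | ⟨h2, h2'⟩) <;> [left; left; left; right] <;> omega
  exact List.isChain_iff_pairwise.mp h.2

lemma sorted_tops {S : List (ℕ × ℕ)} (h : IsCArray S) :
    (S.map Prod.fst).Pairwise (· ≤ ·) := by
  refine List.pairwise_map.mpr ?_
  refine (pairwise_of_carray h).imp ?_
  rintro p q (h1 | ⟨h1, _⟩) <;> omega

lemma top_last {q k : ℕ} (S : List (ℕ × ℕ))
    (hs : (S.map Prod.fst).Pairwise (· ≤ ·))
    (hb : ∀ p ∈ S, p.1 ≤ q)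
    (hc : (S.map Prod.fst).count q = k + 1) :
    ∃ S₀ c, S = S₀ ++ [c] ∧ c.1 = q ∧ (S₀.map Prod.fst).count q = k := by
  induction S using List.reverseRecOn with
  | nil => simp at hc
  | append_singleton l c _ =>
    rcases eq_or_ne c.1 q with hq | hq
    · refine ⟨l, c, rfl, hq, ?_⟩
      have h1 : (l.map Prod.fst ++ [c.1]).count q = k + 1 := by simpa using hc
      rw [List.count_append] at h1
      simp [hq] at h1
      omega
    · exfalso
      have h1 : (l.map Prod.fst ++ [c.1]).count q = k + 1 := by simpa using hc
      rw [List.count_append] at h1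
      have h2 : (l.map Prod.fst).count q ≠ 0 := by
        simp [List.count_singleton', hq] at h1
        omega
      have hmem : q ∈ l.map Prod.fst := List.count_pos_iff.mp (Nat.pos_of_ne_zero h2)
      -- sortedness: q ≤ c.1, but c.1 ≤ q and c.1 ≠ q
      have hcq : c.1 ≤ q := hb c (by simp)
      have hqc : q ≤ c.1 := by
        have hs' : (l.map Prod.fst ++ [c.1]).Pairwise (· ≤ ·) := by simpa using hs
        rw [List.pairwise_append] at hs'
        exact hs'.2.2 q hmem c.1 (by simp)
      omega

lemma top_suffix {q : ℕ} (S : List (ℕ × ℕ))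
    (hs : (S.map Prod.fst).Pairwise (· ≤ ·))
    (hb : ∀ p ∈ S, p.1 ≤ q)
    (hc : (S.map Prod.fst).count q = 2) :
    ∃ S₀ c d, S = S₀ ++ [c, d] ∧ c.1 = q ∧ d.1 = q ∧ ∀ p ∈ S₀, p.1 < q := by
  obtain ⟨S₁, d, rfl, hd, hc1⟩ := top_last S hs hb hc
  have hs1 : (S₁.map Prod.fst).Pairwise (· ≤ ·) := by
    refine List.Pairwise.sublist ?_ hs
    simp [List.map_append]
  obtain ⟨S₀, c, rfl, hcq, hc0⟩ := top_last S₁ hs1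
    (fun p hp => hb p (by simp [hp])) hc1
  refine ⟨S₀, c, d, by simp, hcq, hd, ?_⟩
  intro p hp
  have hle : p.1 ≤ q := hb p (by simp [hp])
  have hne : p.1 ≠ q := by
    intro he
    have : q ∈ S₀.map Prod.fst := by simp; exact ⟨p.2, by rwa [← he] ⟩
    rw [← List.count_pos_iff] at this
    omega
  omega

lemma fst_shift (S : List (ℕ × ℕ)) :
    (S.map shiftP).map Prod.fst = (S.map Prod.fst).map (· + 1) := by
  simp [List.map_map]
  exact fun a b _ => rfl

lemma snd_shift (S : List (ℕ × ℕ)) :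
    (S.map shiftP).map Prod.snd = (S.map Prod.snd).map (· + 1) := by
  simp [List.map_map]
  exact fun a b _ => rfl

lemma count_succ_map (l : List ℕ) (v : ℕ) : (l.map (· + 1)).count (v + 1) = l.count v :=
  List.count_map_of_injective l _ (fun a b h => by omega) v

lemma count_zero_map (l : List ℕ) : (l.map (· + 1)).count 0 = 0 :=
  List.count_eq_zero.mpr (by simp)

lemma cntA_shift (S : List (ℕ × ℕ)) (v : ℕ) : cntA (S.map shiftP) (v + 1) = cntA S v := by
  rw [cntA, cntA, List.count_append, List.count_append, fst_shift, snd_shift,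
    count_succ_map, count_succ_map]

lemma cntA_shift0 (S : List (ℕ × ℕ)) : cntA (S.map shiftP) 0 = 0 := by
  rw [cntA, List.count_append, fst_shift, snd_shift, count_zero_map, count_zero_map]

lemma cntA_pair (a b v : ℕ) :
    cntA [(a, b), (a, b)] v = (if v = a then 2 else 0) + (if v = b then 2 else 0) := by
  simp [cntA, List.count_cons, List.count_nil]
  split_ifs <;> omega

lemma shift_cntA (q : ℕ) (S : List (ℕ × ℕ)) (v : ℕ) :
    cntA (S.map shiftP ++ [(q + 2, 1), (q + 2, 1)]) v =
      (if v = 0 then 0 else cntA S (v - 1)) +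
        ((if v = q + 2 then 2 else 0) + (if v = 1 then 2 else 0)) := by
  rw [cntA_append, cntA_pair]
  cases v with
  | zero => simp [cntA_shift0]
  | succ w => simp [cntA_shift]

lemma shift_cond_iff {q : ℕ} {S : List (ℕ × ℕ)} (hS : ∀ p ∈ S, 1 ≤ p.1 ∧ 1 ≤ p.2) :
    Cond (q + 2) (S.map shiftP ++ [(q + 2, 1), (q + 2, 1)]) ↔ Cond q S := by
  have hdec : (S.map shiftP ++ [(q + 2, 1), (q + 2, 1)]).map Prod.snd =
      (S.map Prod.snd).map (· + 1) ++ [1, 1] := by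
    rw [List.map_append, snd_shift]
    rfl
  constructor
  · rintro ⟨hca, hnorm, hcontent⟩
    have hcontS : ∀ v, cntA S v = if 1 ≤ v ∧ v ≤ q then 2 else 0 := by
      intro v
      have h1 := hcontent (v + 1)
      rw [shift_cntA] at h1
      have e : v + 1 - 1 = v := rfl
      rw [e] at h1
      split_ifs at h1 ⊢ <;> first | contradiction | omega
    refine ⟨⟨?_, ?_⟩, ⟨?_, ?_⟩, hcontS⟩
    · intro p hp
      have := hca.1 (shiftP p) (by
        refine List.mem_append_left _ ?_
        exact List.mem_map_of_mem hp)
      simpa [shiftP] using this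
    · have h1 := (List.isChain_append.mp hca.2).1
      have h2 := (List.isChain_map shiftP).mp h1
      refine h2.imp ?_
      rintro a b (h | ⟨h, h'⟩)
      · left; simpa [shiftP] using h
      · right
        constructor
        · have : a.1 + 1 = b.1 + 1 := h
          omega
        · have : a.2 + 1 ≤ b.2 + 1 := h'
          omega
    · intro v
      rw [hcontS v]; split_ifs <;> omega
    · intro t ht hsort
      have h1 : (t.map (· + 1)).Sublist ((S.map shiftP ++ [(q + 2, 1), (q + 2, 1)]).map Prod.snd) := by
        rw [hdec]
        exact (ht.map _).trans (List.sublist_append_left _ _)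
      have h2 : (t.map (· + 1)).Pairwise (· ≤ ·) := by
        refine List.pairwise_map.mpr ?_
        exact hsort.imp (fun h => Nat.succ_le_succ h)
      have := hnorm.2 (t.map (· + 1)) h1 h2
      simpa using this
  · rintro ⟨hca, hnorm, hcontent⟩
    have hbnd := mem_bounds hcontent
    refine ⟨⟨?_, ?_⟩, ⟨?_, ?_⟩, ?_⟩
    · intro p hp
      rcases List.mem_append.mp hp with hp | hp
      · obtain ⟨p₀, hp₀, rfl⟩ := List.mem_map.mp hp
        have := hca.1 p₀ hp₀
        simp [shiftP]; omega
      · simp at hp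
        rw [hp]
        omega
    · dsimp only [List.Chain']; rw [List.isChain_append]
      refine ⟨?_, ?_, ?_⟩
      · refine (List.isChain_map shiftP).mpr ?_
        refine hca.2.imp ?_
        rintro a b (h | ⟨h, h'⟩)
        · left; simp [shiftP]; omega
        · right; simp [shiftP]; omega
      · exact List.isChain_cons_cons.mpr ⟨Or.inr ⟨rfl, le_rfl⟩, List.isChain_singleton _⟩
      · intro x hx y hy
        have hxm : x ∈ S.map shiftP := List.mem_of_mem_getLast? hx
        obtain ⟨p₀, hp₀, rfl⟩ := List.mem_map.mp hxm
        have := (hbnd p₀ hp₀).2.2.2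
        simp at hy
        rw [← hy]
        left
        simp only [shiftP]
        omega
    · intro v
      rw [shift_cntA, hcontent (v - 1)]
      split_ifs <;> first | contradiction | omega
    · intro t ht hsort
      rw [hdec] at ht
      rw [List.sublist_append_iff] at ht
      obtain ⟨t₁, t₂, rfl, ht₁, ht₂⟩ := ht
      obtain ⟨t₀, ht₀, rfl⟩ := List.sublist_map_iff.mp ht₁
      rcases t₀ with _ | ⟨x, t₀'⟩
      · simpa using ht₂.length_le
      · rcases t₂ with _ | ⟨y, t₂'⟩
        · have hsort' : ((x :: t₀')).Pairwise (· ≤ ·) := by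
            have h3 : (((x :: t₀').map (· + 1))).Pairwise (· ≤ ·) :=
              List.Pairwise.sublist (List.sublist_append_left _ _) hsort
            have h4 := List.pairwise_map.mp h3
            exact h4.imp (fun h => Nat.le_of_succ_le_succ h)
          have := hnorm.2 _ ht₀ hsort'
          simpa using this
        · exfalso
          have hy1 : y = 1 := by
            have := ht₂.subset List.mem_cons_self
            simp at this
            tauto
          have hx1 : 1 ≤ x := by
            have hxm : x ∈ S.map Prod.snd := ht₀.subset List.mem_cons_self
            obtain ⟨p, hp, rfl⟩ := List.mem_map.mp hxm
            exact (hS p hp).2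
          have : x + 1 ≤ y := by
            rw [List.pairwise_append] at hsort
            exact hsort.2.2 (x + 1) (by simp) y (by simp)
          omega
    · intro v
      rw [shift_cntA, hcontent (v - 1)]
      split_ifs <;> first | contradiction | omega

lemma flatMap_congr' {α β : Type*} {l : List α} {f g : α → List β}
    (h : ∀ a ∈ l, f a = g a) : l.flatMap f = l.flatMap g := by
  induction l with
  | nil => rfl
  | cons a l ih =>
    simp only [List.flatMap_cons]
    rw [h a (by simp), ih (fun a ha => h a (by simp [ha]))]

lemma sbar0_succ (r : ℕ) :
    sbar0 (r + 1) = (sbar0 r).map shiftP ++ [(2 * r + 2, 1), (2 * r + 2, 1)] := by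
  rw [sbar0, sbar0, List.range_succ, List.flatMap_append, List.map_flatMap]
  congr 1
  · refine flatMap_congr' ?_
    intro j hj
    rw [List.mem_range] at hj
    have h1 : r + 1 + 1 + j = r + 1 + j + 1 := by omega
    have h2 : r + 1 - j = r - j + 1 := by omega
    simp [shiftP, h1, h2]
  · have h1 : r + 1 + 1 + r = 2 * r + 2 := by omega
    have h2 : r + 1 - r = 1 := by omega
    simp [h1, h2]

lemma sbar0_cond (r : ℕ) : Cond (2 * r) (sbar0 r) := by
  induction r with
  | zero =>
    refine ⟨⟨by simp [sbar0], by simp [sbar0]; exact List.isChain_nil⟩, ⟨?_, ?_⟩, ?_⟩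
    · intro v; simp [cntA, sbar0]
    · intro t ht _
      have : t = [] := List.sublist_nil.mp (by simpa [sbar0] using ht)
      simp [this]
    · intro v
      rw [if_neg (by omega)]
      simp [cntA, sbar0]
  | succ n ih =>
    have hb := mem_bounds ih.2.2
    have hpos : ∀ p ∈ sbar0 n, 1 ≤ p.1 ∧ 1 ≤ p.2 := fun p hp => ⟨(hb p hp).2.2.1, (hb p hp).1⟩
    have h1 := (shift_cond_iff (q := 2 * n) hpos).mpr ih
    rw [sbar0_succ]
    have e : 2 * (n + 1) = 2 * n + 2 := by omega
    rw [e]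
    exact h1

lemma cond_forward : ∀ q S, Cond q S → ∃ r, q = 2 * r ∧ S = sbar0 r := by
  intro q
  induction q using Nat.strong_induction_on with
  | _ q ih =>
    intro S h
    rcases Nat.eq_zero_or_pos q with rfl | hq
    · refine ⟨0, rfl, ?_⟩
      have hS : S = [] := by
        rcases S with _ | ⟨p, S'⟩
        · rfl
        · exfalso
          have := mem_bounds h.2.2 p (by simp)
          omega
      simp [hS, sbar0]
    · obtain ⟨hca, hnorm, hcontent⟩ := h
      have hb := mem_bounds hcontent
      have hst := sorted_tops hca
      have hq2 : cntA S q = 2 := by rw [hcontent, if_pos ⟨hq, le_refl q⟩]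
      have hsnd0 : (S.map Prod.snd).count q = 0 := by
        rw [List.count_eq_zero]
        intro hmem
        obtain ⟨p, hp, hpq⟩ := List.mem_map.mp hmem
        have h1 := hca.1 p hp
        have h2 := (hb p hp).2.2.2
        omega
      have ecnt : cntA S q = (S.map Prod.fst).count q + (S.map Prod.snd).count q := by
        rw [cntA, List.count_append]
      have hfst2 : (S.map Prod.fst).count q = 2 := by omega
      obtain ⟨S₀, c, d, hSdecomp, hc1, hd1, hlt⟩ :=
        top_suffix S hst (fun p hp => (hb p hp).2.2.2) hfst2
      have hcd : c.2 ≤ d.2 := by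
        have h1 := hca.2
        rw [hSdecomp] at h1; dsimp only [List.Chain'] at h1; rw [List.isChain_append] at h1
        have h3 := (List.isChain_cons_cons.mp h1.2.1).1
        rcases h3 with h3 | h3
        · omega
        · exact h3.2
      have hcS : c ∈ S := by rw [hSdecomp]; simp
      have hdS : d ∈ S := by rw [hSdecomp]; simp
      have hsnddec : S.map Prod.snd = S₀.map Prod.snd ++ [c.2, d.2] := by
        rw [hSdecomp]; simp
      have hS0b : (S₀.map Prod.snd).count 1 = 0 := by
        rw [List.count_eq_zero]
        intro hmem
        have h1 : [1, c.2, d.2].Sublist (S.map Prod.snd) := by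
          rw [hsnddec]
          exact List.Sublist.append (List.singleton_sublist.mpr hmem) (List.Sublist.refl _)
        have hc2 := (hb c hcS).1
        have hd2 := (hb d hdS).1
        have h2 : [1, c.2, d.2].Pairwise (· ≤ ·) := by
          simp [List.pairwise_cons]
          omega
        have := hnorm.2 _ h1 h2
        simp at this
      have hfst1 : (S.map Prod.fst).count 1 = 0 := by
        rw [List.count_eq_zero]
        intro hmem
        obtain ⟨p, hp, hpq⟩ := List.mem_map.mp hmem
        have h1 := hca.1 p hp
        have h2 := (hb p hp).1
        omega
      have h1cnt : cntA S 1 = 2 := by rw [hcontent, if_pos ⟨le_refl 1, hq⟩]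
      have ecnt1 : cntA S 1 = (S.map Prod.fst).count 1 + (S.map Prod.snd).count 1 := by
        rw [cntA, List.count_append]
      have hsnd1 : (S.map Prod.snd).count 1 = 2 := by omega
      have e2 : (S.map Prod.snd).count 1 = (S₀.map Prod.snd).count 1 + [c.2, d.2].count 1 := by
        rw [hsnddec, List.count_append]
      have e3 : [c.2, d.2].count 1 =
          (if c.2 = 1 then 1 else 0) + (if d.2 = 1 then 1 else 0) := by
        simp [List.count_cons, List.count_nil]
        split_ifs <;> omega
      have hc2d2 : c.2 = 1 ∧ d.2 = 1 := by
        split_ifs at e3 <;> omega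
      have hq2' : 2 ≤ q := by
        have h1 := hca.1 c hcS
        omega
      have hS0bound : ∀ p ∈ S₀, 2 ≤ p.2 ∧ 3 ≤ p.1 := by
        intro p hp
        have hpS : p ∈ S := by rw [hSdecomp]; simp [hp]
        have h1 := (hb p hpS).1
        have h2 : p.2 ≠ 1 := by
          intro he
          have : (1 : ℕ) ∈ S₀.map Prod.snd := by
            simp only [List.mem_map]
            exact ⟨p, hp, he⟩
          rw [← List.count_pos_iff] at this
          omega
        have h3 := hca.1 p hpS
        omega
      set S₁ := S₀.map (fun p => (p.1 - 1, p.2 - 1)) with hS₁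
      have hS0eq : S₀ = S₁.map shiftP := by
        rw [hS₁, List.map_map]
        conv_lhs => rw [← List.map_id S₀]
        refine List.map_congr_left ?_
        intro p hp
        have := hS0bound p hp
        simp only [id_eq, Function.comp_apply, shiftP]
        refine (Prod.ext ?_ ?_).symm <;> simp <;> omega
      have hpos₁ : ∀ p ∈ S₁, 1 ≤ p.1 ∧ 1 ≤ p.2 := by
        intro p hp
        rw [hS₁] at hp
        obtain ⟨p₀, hp₀, rfl⟩ := List.mem_map.mp hp
        have := hS0bound p₀ hp₀
        simp only []
        omega
      have hcd' : [c, d] = [((q - 2) + 2, 1), ((q - 2) + 2, 1)] := by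
        have hc' : c = (q, 1) := Prod.ext hc1 hc2d2.1
        have hd' : d = (q, 1) := Prod.ext hd1 hc2d2.2
        have e : (q - 2) + 2 = q := by omega
        rw [hc', hd', e]
      have hSfinal : S = S₁.map shiftP ++ [((q - 2) + 2, 1), ((q - 2) + 2, 1)] := by
        rw [hSdecomp, ← hS0eq, hcd']
      have hcond₁ : Cond (q - 2) S₁ := by
        refine (shift_cond_iff hpos₁).mp ?_
        rw [← hSfinal]
        have e : (q - 2) + 2 = q := by omega
        rw [e]
        exact ⟨hca, hnorm, hcontent⟩
      obtain ⟨r', hr', hSr⟩ := ih (q - 2) (by omega) S₁ hcond₁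
      refine ⟨r' + 1, by omega, ?_⟩
      rw [sbar0_succ, ← hSr, hSfinal]
      have e : (q - 2) + 2 = 2 * r' + 2 := by omega
      rw [e]

end CArrayAux

/-- the number of normal c-arrays of content `(2, …, 2)` (`q` twos)
is `1` if `q` is even and `0` if `q` is odd; for `q = 2r` the unique such array
has columns `(r+j, r+1-j)` each repeated twice. -/
theorem count_normal_carrays_all_twos (q : ℕ) :
    (Nat.card {S : List (ℕ × ℕ) // IsCArray S ∧ IsNormal S ∧
        (∀ v, cntA S v = if 1 ≤ v ∧ v ≤ q then 2 else 0)} =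
      if Even q then 1 else 0) ∧
    (∀ r : ℕ, q = 2 * r →
      ∀ S : List (ℕ × ℕ),
        (IsCArray S ∧ IsNormal S ∧
          (∀ v, cntA S v = if 1 ≤ v ∧ v ≤ q then 2 else 0)) ↔ S = sbar0 r) := by
  constructor
  · by_cases hq : Even q
    · rw [if_pos hq]
      obtain ⟨r, hr⟩ := hq
      have h2 : q = 2 * r := by omega
      rw [Nat.card_eq_one_iff_unique]
      constructor
      · constructor
        rintro ⟨S, hS⟩ ⟨T, hT⟩
        obtain ⟨r1, hr1, hS1⟩ := CArrayAux.cond_forward q S hS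
        obtain ⟨r2, hr2, hT1⟩ := CArrayAux.cond_forward q T hT
        have he : r1 = r2 := by omega
        exact Subtype.ext (show S = T by rw [hS1, hT1, he])
      · exact ⟨⟨sbar0 r, h2 ▸ CArrayAux.sbar0_cond r⟩⟩
    · rw [if_neg hq]
      haveI : IsEmpty {S : List (ℕ × ℕ) // IsCArray S ∧ IsNormal S ∧
          (∀ v, cntA S v = if 1 ≤ v ∧ v ≤ q then 2 else 0)} := by
        constructor
        rintro ⟨S, hS⟩
        obtain ⟨r, hr, _⟩ := CArrayAux.cond_forward q S hS
        exact hq ⟨r, by omega⟩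
      exact Nat.card_of_isEmpty
  · intro r hr S
    constructor
    · intro h
      obtain ⟨r', hr', hS⟩ := CArrayAux.cond_forward q S h
      have he : r' = r := by omega
      rw [hS, he]
    · rintro rfl
      exact hr ▸ CArrayAux.sbar0_cond r
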